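/- arXiv:1506.06421 — 6 statements merged into one kernel-verified Lean document; each statement's English description precedes it below -/
import Mathlib

section
/- The function Φ(z) = a/z + b + c·z is injective on the punctured open unit disc {z : 0 < |z| < 1} if and only if |a| ≥ |c|. -/
/-- Φ(z) = a/z + b + c·z is injective on the punctured open unit disc iff |a| ≥ |c|. -/
theorem stmt_0 (a b c : ℂ) (ha : a ≠ 0) :
    Set.InjOn (fun z : ℂ => a / z + b + c * z)
      {z : ℂ | 0 < ‖z‖ ∧ ‖z‖ < 1} ↔
    ‖c‖ ≤ ‖a‖ := by
  constructor
  · intro hinj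
    by_contra hlt
    push_neg at hlt
    have hc : c ≠ 0 := by
      intro h
      rw [h] at hlt
      simp at hlt
      exact absurd hlt (norm_nonneg a).not_gt
    -- d = a / c, |d| < 1, d ≠ 0
    set d : ℂ := a / c with hd
    have hd0 : d ≠ 0 := div_ne_zero ha hc
    have hdlt : ‖d‖ < 1 := by
      rw [hd, norm_div]
      rw [div_lt_one (norm_pos_iff.mpr hc)]
      exact hlt
    obtain ⟨u, hu⟩ := IsAlgClosed.exists_pow_nat_eq d (n := 2) (by norm_num)
    have hu0 : u ≠ 0 := by
      intro h; rw [h] at hu; simp at hu; exact hd0 hu.symm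
    have hupos : 0 < ‖u‖ := norm_pos_iff.mpr hu0
    have hul : ‖u‖ < 1 := by
      nlinarith [norm_nonneg u, norm_pow u 2, hu,
        congrArg norm hu]
    set lam : ℝ := (1 + (‖u‖)⁻¹) / 2 with hlam
    have hlam1 : 1 < lam := by
      have : 1 < (‖u‖)⁻¹ := one_lt_inv₀ hupos |>.mpr hul
      rw [hlam]; linarith
    have hlaminv : lam < (‖u‖)⁻¹ := by
      have : 1 < (‖u‖)⁻¹ := one_lt_inv₀ hupos |>.mpr hul
      rw [hlam]; linarith
    have hlam0 : (0:ℝ) < lam := by linarith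
    have hlamC : (lam : ℂ) ≠ 0 := by exact_mod_cast hlam0.ne'
    set z : ℂ := (lam : ℂ) * u with hz
    set w : ℂ := u / (lam : ℂ) with hw
    have hzmem : z ∈ {z : ℂ | 0 < ‖z‖ ∧ ‖z‖ < 1} := by
      constructor
      · exact norm_pos_iff.mpr (mul_ne_zero hlamC hu0)
      · rw [hz, norm_mul, Complex.norm_real, Real.norm_of_nonneg hlam0.le]
        calc lam * ‖u‖ < (‖u‖)⁻¹ * ‖u‖ := by
              exact mul_lt_mul_of_pos_right hlaminv hupos
          _ = 1 := inv_mul_cancel₀ hupos.ne'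
    have hwmem : w ∈ {z : ℂ | 0 < ‖z‖ ∧ ‖z‖ < 1} := by
      constructor
      · rw [hw, norm_div, Complex.norm_real, Real.norm_of_nonneg hlam0.le]
        positivity
      · rw [hw, norm_div, Complex.norm_real, Real.norm_of_nonneg hlam0.le]
        rw [div_lt_one hlam0]
        calc ‖u‖ < 1 := hul
          _ < lam := hlam1
    have hzw : z ≠ w := by
      intro h
      rw [hz, hw] at h
      have h2 : (lam : ℂ) * (lam : ℂ) * u = 1 * u := by
        field_simp at h
        linear_combination u * h
      have h3 : (lam : ℂ) * (lam : ℂ) = 1 := mul_right_cancel₀ hu0 h2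
      have h4 : lam * lam = 1 := by exact_mod_cast h3
      nlinarith [hlam1]
    have ha' : a = c * u ^ 2 := by
      rw [hu, hd]; field_simp
    have heq : (fun z : ℂ => a / z + b + c * z) z = (fun z : ℂ => a / z + b + c * z) w := by
      simp only
      rw [ha', hz, hw]
      field_simp
      ring
    exact hzw (hinj hzmem hwmem heq)
  · intro hle z hz w hw heq
    simp only [Set.mem_setOf_eq] at hz hw
    have hz0 : z ≠ 0 := by
      intro h; rw [h] at hz; simp at hz
    have hw0 : w ≠ 0 := by
      intro h; rw [h] at hw; simp at hw
    simp only at heq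
    have key3 : (z - w) * (a - c * (z * w)) * (z * w) = 0 := by
      have h2 : (a / z + b + c * z) * (z * w) = (a / w + b + c * w) * (z * w) := by
        rw [heq]
      field_simp at h2
      linear_combination (-(z * w)) * h2
    have key : (z - w) * (a - c * (z * w)) = 0 := by
      rcases mul_eq_zero.mp key3 with h | h
      · exact h
      · exact absurd h (mul_ne_zero hz0 hw0)
    rcases mul_eq_zero.mp key with h | h
    · exact sub_eq_zero.mp h
    · exfalso
      have hacw : a = c * (z * w) := by linear_combination h
      have h1 : ‖a‖ = ‖c‖ * (‖z‖ * ‖w‖) := by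
        rw [hacw, norm_mul, norm_mul]
      have hp : 0 ≤ ‖z‖ * ‖w‖ := mul_nonneg hz.1.le hw.1.le
      have hp1 : ‖z‖ * ‖w‖ < 1 := by
        nlinarith [hz.1, hz.2, hw.1, hw.2]
      have h2 := mul_le_mul_of_nonneg_right hle hp
      have h3 := mul_lt_of_lt_one_right (norm_pos_iff.mpr ha) hp1
      linarith
end

section
/- The function Φ(z) = a/z + b + c·z is injective on the punctured closed unit disc {z : 0 < |z| ≤ 1} if and only if |a| > |c|. -/
/-- Φ(z) = a/z + b + c·z is injective on the punctured closed unit disc iff |a| > |c|. -/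
theorem stmt_1 (a b c : ℂ) (ha : a ≠ 0) :
    Set.InjOn (fun z : ℂ => a / z + b + c * z)
      {z : ℂ | 0 < ‖z‖ ∧ ‖z‖ ≤ 1} ↔
    ‖c‖ < ‖a‖ := by
  constructor
  · intro hinj
    by_contra h
    push_neg at h
    have hc : c ≠ 0 := by
      intro hc0
      rw [hc0] at h
      simp at h
      have h0 : ‖a‖ = 0 := by simp [h]
      exact ha (norm_eq_zero.mp h0)
    set t : ℂ := a / c with htdef
    have ht0 : t ≠ 0 := div_ne_zero ha hc
    have htabs : ‖t‖ ≤ 1 := by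
      rw [htdef, norm_div]
      exact div_le_one_of_le₀ h (norm_nonneg c)
    by_cases ht1 : t = 1
    · have hac : a = c := by
        have := ht1
        rw [htdef, div_eq_one_iff_eq hc] at this
        exact this
      have hI : (Complex.I : ℂ) ∈ {z : ℂ | 0 < ‖z‖ ∧ ‖z‖ ≤ 1} := by
        simp [Complex.norm_I]
      have hnI : (-Complex.I : ℂ) ∈ {z : ℂ | 0 < ‖z‖ ∧ ‖z‖ ≤ 1} := by
        simp [Complex.norm_I]
      have heq : (fun z : ℂ => a / z + b + c * z) Complex.I =
          (fun z : ℂ => a / z + b + c * z) (-Complex.I) := by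
        simp only [hac]
        have : (Complex.I : ℂ) ≠ 0 := Complex.I_ne_zero
        field_simp
        ring_nf
        simp [Complex.I_sq]
      have hII := hinj hI hnI heq
      have hI0 : Complex.I = 0 := by linear_combination hII / 2
      simp [Complex.I_ne_zero] at hI0
    · have hmem : t ∈ {z : ℂ | 0 < ‖z‖ ∧ ‖z‖ ≤ 1} := by
        refine ⟨?_, htabs⟩
        simpa [norm_pos_iff] using ht0
      have hone : (1 : ℂ) ∈ {z : ℂ | 0 < ‖z‖ ∧ ‖z‖ ≤ 1} := by simp
      have heq : (fun z : ℂ => a / z + b + c * z) t =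
          (fun z : ℂ => a / z + b + c * z) 1 := by
        simp only
        rw [htdef]
        field_simp
        ring
      exact ht1 (hinj hmem hone heq)
  · intro hlt z hz w hw heq
    by_contra hne
    have hz0 : z ≠ 0 := by
      intro h0; rw [h0] at hz; simp at hz
    have hw0 : w ≠ 0 := by
      intro h0; rw [h0] at hw; simp at hw
    simp only at heq
    have key : (z - w) * (c * (z * w) - a) = 0 := by
      have h : a / z + b + c * z = a / w + b + c * w := heq
      field_simp at h
      linear_combination h
    rcases mul_eq_zero.mp key with h1 | h2
    · exact hne (sub_eq_zero.mp h1)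
    · have hcz : c * (z * w) = a := sub_eq_zero.mp h2
      have : ‖a‖ = ‖c‖ * (‖z‖ * ‖w‖) := by
        rw [← hcz]; simp [map_mul]
      have h1 := hz.2
      have h2 := hw.2
      have h3 : (0:ℝ) ≤ ‖z‖ := norm_nonneg z
      have h4 : (0:ℝ) ≤ ‖w‖ := norm_nonneg w
      have h5 : (0:ℝ) ≤ ‖c‖ := norm_nonneg c
      have hp : ‖z‖ * ‖w‖ ≤ 1 := mul_le_one₀ h1 h4 h2
      nlinarith
end

section
/- If T is a continuous linear operator on a complex Banach space X and the adjoint T* has an eigenvector, then T is not hypercyclic. -/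
/-- If the Banach-space adjoint of T has an eigenvector, then T is not hypercyclic. -/
theorem stmt_2 (X : Type*) [NormedAddCommGroup X] [NormedSpace ℂ X] [CompleteSpace X]
    [TopologicalSpace.SeparableSpace X]
    (T : X →L[ℂ] X)
    (h : ∃ (φ : X →L[ℂ] ℂ) (μ : ℂ), φ ≠ 0 ∧ φ.comp T = μ • φ) :
    ¬ ∃ x : X, Dense (Set.range fun n : ℕ => (T ^ n) x) := by
  rintro ⟨x, hx⟩
  obtain ⟨φ, μ, hφ, hcomp⟩ := h
  -- φ is surjective, hence has dense range
  obtain ⟨y, hy⟩ : ∃ y, φ y ≠ 0 := by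
    by_contra hall
    push_neg at hall
    exact hφ (ContinuousLinearMap.ext fun z => by simp [hall z])
  have hsurj : Function.Surjective φ := by
    intro z
    exact ⟨(z / φ y) • y, by simp [div_mul_cancel₀ _ hy]⟩
  have hval : ∀ n : ℕ, φ ((T ^ n) x) = μ ^ n * φ x := by
    intro n
    induction n with
    | zero => simp
    | succ n ih =>
      have h1 : (T ^ (n + 1)) x = T ((T ^ n) x) := by
        rw [pow_succ']; rfl
      have h2 : φ (T ((T ^ n) x)) = μ * φ ((T ^ n) x) := by
        have := congrArg (fun (ψ : X →L[ℂ] ℂ) => ψ ((T ^ n) x)) hcomp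
        simpa using this
      rw [h1, h2, ih, pow_succ]
      ring
  have hdr : DenseRange (fun n : ℕ => (T ^ n) x) := hx
  have hd : DenseRange (fun n : ℕ => μ ^ n * φ x) := by
    have := (hsurj.denseRange.comp hdr φ.continuous)
    have heq : (φ ∘ fun n : ℕ => (T ^ n) x) = fun n : ℕ => μ ^ n * φ x := by
      funext n; exact hval n
    rwa [heq] at this
  rw [Metric.denseRange_iff] at hd
  set c := φ x with hc
  by_cases hc0 : c = 0
  · obtain ⟨n, hn⟩ := hd 1 1 one_pos
    simp [hc0] at hn
  · by_cases hμ : ‖μ‖ ≤ 1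
    · obtain ⟨n, hn⟩ := hd ((2 * ‖c‖ + 1 : ℝ) : ℂ) 1 one_pos
      have hb : ‖μ ^ n * c‖ ≤ ‖c‖ := by
        rw [norm_mul, norm_pow]
        calc ‖μ‖ ^ n * ‖c‖ ≤ 1 * ‖c‖ := by
              apply mul_le_mul_of_nonneg_right _ (norm_nonneg c)
              exact pow_le_one₀ (norm_nonneg μ) hμ
          _ = ‖c‖ := one_mul _
      have : dist ((2 * ‖c‖ + 1 : ℝ) : ℂ) (μ ^ n * c) ≥ 1 := by
        have h1 : ‖((2 * ‖c‖ + 1 : ℝ) : ℂ)‖ = 2 * ‖c‖ + 1 := by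
          rw [Complex.norm_real]
          rw [Real.norm_eq_abs, abs_of_nonneg]
          positivity
        calc dist ((2 * ‖c‖ + 1 : ℝ) : ℂ) (μ ^ n * c)
            ≥ ‖((2 * ‖c‖ + 1 : ℝ) : ℂ)‖ - ‖μ ^ n * c‖ := by
              rw [dist_eq_norm]
              exact norm_sub_norm_le _ _
          _ ≥ (2 * ‖c‖ + 1) - ‖c‖ := by rw [h1]; linarith
          _ ≥ 1 := by linarith [norm_nonneg c]
      linarith
    · push_neg at hμ
      obtain ⟨n, hn⟩ := hd 0 ‖c‖ (norm_pos_iff.mpr hc0)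
      have hb : ‖μ ^ n * c‖ ≥ ‖c‖ := by
        rw [norm_mul, norm_pow]
        calc ‖c‖ = 1 * ‖c‖ := (one_mul _).symm
          _ ≤ ‖μ‖ ^ n * ‖c‖ := by
              apply mul_le_mul_of_nonneg_right _ (norm_nonneg c)
              exact one_le_pow₀ hμ.le
      rw [dist_eq_norm, zero_sub, norm_neg] at hn
      linarith
end

section
/- A normal bounded operator on a complex Hilbert space is never hypercyclic. -/
open ContinuousLinearMap

lemma normal_key {H : Type*} [NormedAddCommGroup H] [InnerProductSpace ℂ H]
    [CompleteSpace H] (T : H →L[ℂ] H)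
    (hnormal : T ∘L ContinuousLinearMap.adjoint T = ContinuousLinearMap.adjoint T ∘L T)
    (y : H) : ‖T y‖ ^ 2 ≤ ‖T (T y)‖ * ‖y‖ := by
  have hc : ∀ z : H, T (adjoint T z) = adjoint T (T z) := fun z =>
    congrFun (congrArg DFunLike.coe hnormal) z
  have hadj : ∀ z : H, ‖adjoint T z‖ = ‖T z‖ := by
    intro z
    have h1 : (inner ℂ (adjoint T z) (adjoint T z) : ℂ) = inner ℂ (T z) (T z) := by
      rw [adjoint_inner_left, hc, adjoint_inner_right]
    rw [inner_self_eq_norm_sq_to_K, inner_self_eq_norm_sq_to_K] at h1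
    have h2 : ‖adjoint T z‖ ^ 2 = ‖T z‖ ^ 2 := by exact_mod_cast h1
    nlinarith [norm_nonneg (adjoint T z), norm_nonneg (T z)]
  have h3 : (‖T y‖ : ℝ) ^ 2 = Complex.re (inner ℂ (adjoint T (T y)) y : ℂ) := by
    rw [adjoint_inner_left, inner_self_eq_norm_sq_to_K]
    norm_cast
  calc ‖T y‖ ^ 2 = Complex.re (inner ℂ (adjoint T (T y)) y : ℂ) := h3
    _ ≤ ‖(inner ℂ (adjoint T (T y)) y : ℂ)‖ := (le_abs_self _).trans (Complex.abs_re_le_norm _)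
    _ ≤ ‖adjoint T (T y)‖ * ‖y‖ := norm_inner_le_norm _ _
    _ = ‖T (T y)‖ * ‖y‖ := by rw [hadj]

/-- A normal bounded operator on a complex Hilbert space is never hypercyclic. -/
theorem stmt_5 (H : Type*) [NormedAddCommGroup H] [InnerProductSpace ℂ H]
    [CompleteSpace H] [Nontrivial H] [TopologicalSpace.SeparableSpace H]
    (T : H →L[ℂ] H)
    (hnormal : T ∘L ContinuousLinearMap.adjoint T = ContinuousLinearMap.adjoint T ∘L T) :
    ¬ ∃ x : H, Dense (Set.range fun n : ℕ => (T ^ n) x) := by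
  rintro ⟨x, hd⟩
  set a : ℕ → ℝ := fun n => ‖(T ^ n) x‖ with ha
  have hsucc : ∀ n : ℕ, (T ^ (n + 1)) x = T ((T ^ n) x) := by
    intro n
    rw [pow_succ']
    rfl
  -- log-convexity
  have hlog : ∀ n : ℕ, a (n + 1) ^ 2 ≤ a (n + 2) * a n := by
    intro n
    have := normal_key T hnormal ((T ^ n) x)
    show ‖(T ^ (n + 1)) x‖ ^ 2 ≤ ‖(T ^ (n + 1 + 1)) x‖ * ‖(T ^ n) x‖
    simp only [hsucc]
    exact this
  -- unboundedness from density
  have hub : ∀ R : ℝ, ∃ n : ℕ, R < a n := by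
    intro R
    obtain ⟨u, hu⟩ := exists_ne (0 : H)
    set v : H := ((max R 0 + 2) / ‖u‖) • u with hv
    have hvnorm : ‖v‖ = max R 0 + 2 := by
      rw [hv, norm_smul, Real.norm_eq_abs, abs_of_nonneg (by positivity),
        div_mul_cancel₀ _ (norm_ne_zero_iff.mpr hu)]
    obtain ⟨y, hy, hymem⟩ := (Metric.dense_iff.mp hd v 1 one_pos)
    obtain ⟨n, rfl⟩ := hymem
    refine ⟨n, ?_⟩
    have h1 : dist v ((T ^ n) x) < 1 := by
      rw [dist_comm]; exact Metric.mem_ball.mp hy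
    have h2 : ‖v‖ - ‖(T ^ n) x‖ ≤ ‖v - (T ^ n) x‖ := norm_sub_norm_le _ _
    rw [dist_eq_norm] at h1
    have : max R 0 + 1 < ‖(T ^ n) x‖ := by
      rw [hvnorm] at h2; linarith
    have hR : R ≤ max R 0 := le_max_left _ _
    simp only [ha]
    linarith
  -- approach zero from density
  have hlb : ∀ ε : ℝ, 0 < ε → ∃ n : ℕ, a n < ε := by
    intro ε hε
    obtain ⟨y, hy, hymem⟩ := (Metric.dense_iff.mp hd 0 ε hε)
    obtain ⟨n, rfl⟩ := hymem
    refine ⟨n, ?_⟩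
    have : dist (0 : H) ((T ^ n) x) < ε := by rw [dist_comm]; exact Metric.mem_ball.mp hy
    simpa [ha, dist_eq_norm] using this
  -- positivity
  have hpos : ∀ n : ℕ, 0 < a n := by
    by_contra h
    push_neg at h
    obtain ⟨k, hk⟩ := h
    have hk0 : (T ^ k) x = 0 := by
      have : a k = 0 := le_antisymm hk (norm_nonneg _)
      simpa [ha] using this
    have hzero : ∀ m : ℕ, k ≤ m → a m = 0 := by
      intro m hm
      obtain ⟨j, rfl⟩ := Nat.exists_eq_add_of_le hm
      have : (T ^ (k + j)) x = (T ^ j) ((T ^ k) x) := by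
        rw [add_comm, pow_add]; rfl
      simp only [ha, this, hk0, map_zero, norm_zero]
    set M : ℝ := (Finset.range (k + 1)).sup' (by simp) a with hM
    obtain ⟨n, hn⟩ := hub M
    rcases le_or_gt n k with h1 | h1
    · have : a n ≤ M := Finset.le_sup' a (Finset.mem_range.mpr (by omega))
      linarith
    · have := hzero n (by omega)
      have hM0 : 0 ≤ M := le_trans (norm_nonneg _)
        (Finset.le_sup' a (Finset.mem_range.mpr (by omega)) : a 0 ≤ M)
      linarith
  -- there is an increase
  have hinc : ∃ k : ℕ, a k < a (k + 1) := by
    by_contra h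
    push_neg at h
    have hmono : ∀ n : ℕ, a n ≤ a 0 := by
      intro n
      induction n with
      | zero => exact le_refl _
      | succ m ih => exact le_trans (h m) ih
    obtain ⟨n, hn⟩ := hub (a 0)
    exact absurd (hmono n) (not_le.mpr hn)
  obtain ⟨k, hk⟩ := hinc
  -- from k on, strictly increasing
  have hstep : ∀ n : ℕ, k ≤ n → a n < a (n + 1) := by
    intro n hn
    induction n with
    | zero =>
      have : k = 0 := Nat.le_zero.mp hn
      simpa [this] using hk
    | succ m ih =>
      rcases Nat.lt_or_ge k (m + 1) with h1 | h1
      · have hm : k ≤ m := by omega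
        have h2 := ih hm
        have h3 := hlog m
        nlinarith [hpos m, hpos (m + 1), hpos (m + 2)]
      · have : k = m + 1 := by omega
        simpa [this] using hk
  have hge : ∀ n : ℕ, k ≤ n → a k ≤ a n := by
    intro n hn
    induction n with
    | zero => simp [Nat.le_zero.mp hn]
    | succ m ih =>
      rcases Nat.lt_or_ge k (m + 1) with h1 | h1
      · exact le_trans (ih (by omega)) (le_of_lt (hstep m (by omega)))
      · have : k = m + 1 := by omega
        simp [this]
  -- contradiction with approach to zero
  set ε : ℝ := (Finset.range (k + 1)).inf' (by simp) a with hε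
  have hεpos : 0 < ε := by
    rw [hε, Finset.lt_inf'_iff]
    intro i _
    exact hpos i
  obtain ⟨n, hn⟩ := hlb ε hεpos
  rcases le_or_gt n k with h1 | h1
  · have : ε ≤ a n := Finset.inf'_le a (Finset.mem_range.mpr (by omega))
    linarith
  · have h2 : a k ≤ a n := hge n (by omega)
    have h3 : ε ≤ a k := Finset.inf'_le a (Finset.mem_range.mpr (by omega))
    linarith
end

section
/- Let T be the left shift on ℓ²(ℕ, ℂ) and let α ∈ ℂ with |α| > 1. Then both the span of eigenvectors of αT with eigenvalues of modulus < 1 and the span of eigenvectors with eigenvalues of modulus > 1 are dense in ℓ²; consequently (via the Godefroy–Shapiro criterion) αT is hypercyclic. -/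
open Filter Topology TopologicalSpace
open scoped ENNReal NNReal ComplexConjugate

noncomputable section

namespace Stmt12Aux

local notation "Hsp" => lp (fun _ : ℕ => ℂ) 2

lemma memlp_geom {ν : ℂ} (hν : ‖ν‖ < 1) : Memℓp (fun n : ℕ => ν ^ n) 2 := by
  apply memℓp_gen
  have h2 : (2 : ℝ≥0∞).toReal = ((2 : ℕ) : ℝ) := by norm_num
  have : (fun n : ℕ => ‖(fun m : ℕ => ν ^ m) n‖ ^ (2 : ℝ≥0∞).toReal)
      = fun n : ℕ => (‖ν‖ ^ 2) ^ n := by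
    funext n
    rw [h2, Real.rpow_natCast, norm_pow, ← pow_mul, ← pow_mul, Nat.mul_comm]
  rw [this]
  exact summable_geometric_of_lt_one (by positivity)
    (pow_lt_one₀ (norm_nonneg ν) hν two_ne_zero)

def eVec (ν : ℂ) (hν : ‖ν‖ < 1) : Hsp := ⟨fun n => ν ^ n, memlp_geom hν⟩

@[simp] lemma eVec_apply (ν : ℂ) (hν : ‖ν‖ < 1) (n : ℕ) :
    (eVec ν hν : ∀ _ : ℕ, ℂ) n = ν ^ n := rfl

lemma eVec_ne_zero (ν : ℂ) (hν : ‖ν‖ < 1) : eVec ν hν ≠ 0 := by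
  intro h
  have := congrFun (congrArg (fun x : Hsp => (x : ∀ _ : ℕ, ℂ)) h) 0
  simp [lp.coeFn_zero] at this


/-- coefficients of a bounded-coefficient power series vanishing on a nonempty open
subset of the unit disc are all zero. -/
lemma coeff_zero {c : ℕ → ℂ} {C : ℝ} (hC : ∀ n, ‖c n‖ ≤ C) {S : Set ℂ}
    (hSo : IsOpen S) (hSne : S.Nonempty) (hS1 : ∀ μ ∈ S, ‖μ‖ < 1)
    (hsum : ∀ μ ∈ S, ∑' n, c n • μ ^ n = 0) : c = 0 := by
  set p : FormalMultilinearSeries ℂ ℂ ℂ := FormalMultilinearSeries.ofScalars ℂ c with hp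
  have hrad : (1 : ℝ≥0∞) ≤ p.radius := by
    have := p.le_radius_of_bound C (r := 1) (fun n => by
      rw [hp, FormalMultilinearSeries.ofScalars_norm]; simpa using hC n)
    simpa using this
  have hball : HasFPowerSeriesOnBall p.sum p 0 1 :=
    (p.hasFPowerSeriesOnBall (lt_of_lt_of_le one_pos hrad)).mono one_pos hrad
  have hsum_eq : ∀ μ : ℂ, p.sum μ = ∑' n, c n • μ ^ n := fun μ =>
    FormalMultilinearSeries.ofScalars_sum_eq c μ
  have hball_eq : Metric.eball (0 : ℂ) 1 = Metric.ball (0 : ℂ) 1 := by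
    rw [show (1 : ℝ≥0∞) = ((1 : ℝ≥0) : ℝ≥0∞) by simp, Metric.emetric_ball_nnreal]
    norm_num
  have hAn : AnalyticOnNhd ℂ p.sum (Metric.ball (0 : ℂ) 1) := by
    rw [← hball_eq]; exact hball.analyticOnNhd
  obtain ⟨z₀, hz₀⟩ := hSne
  have hEq : Set.EqOn p.sum 0 (Metric.ball (0 : ℂ) 1) := by
    apply hAn.eqOn_zero_of_preconnected_of_eventuallyEq_zero
      ((convex_ball (0:ℂ) 1).isPreconnected)
      (show z₀ ∈ Metric.ball (0:ℂ) 1 by simpa [Metric.mem_ball, dist_zero_right] using hS1 z₀ hz₀)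
    filter_upwards [hSo.mem_nhds hz₀] with μ hμ
    simp only [hsum_eq, Pi.zero_apply]; simpa [smul_eq_mul] using hsum μ hμ
  have hev : p.sum =ᶠ[𝓝 (0 : ℂ)] 0 := by
    filter_upwards [Metric.ball_mem_nhds (0 : ℂ) one_pos] with μ hμ
    exact hEq hμ
  have hzero : p = 0 := hball.hasFPowerSeriesAt.eq_zero_of_eventually hev
  rw [hp] at hzero
  exact (FormalMultilinearSeries.ofScalars_series_eq_zero ℂ).mp hzero

/-- The span of the geometric eigenvectors indexed by a nonempty open conjugation-stable
subset of the unit disc is dense in ℓ². -/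
lemma dense_span_eVec (S : Set ℂ) (hSo : IsOpen S) (hSne : S.Nonempty)
    (hS1 : ∀ ν ∈ S, ‖ν‖ < 1) (hSconj : ∀ ν ∈ S, (starRingEnd ℂ) ν ∈ S) :
    Dense (Submodule.span ℂ
      {x : Hsp | ∃ ν, ∃ h : ‖ν‖ < 1, ν ∈ S ∧ x = eVec ν h} : Set Hsp) := by
  rw [Submodule.dense_iff_topologicalClosure_eq_top,
    Submodule.topologicalClosure_eq_top_iff, Submodule.eq_bot_iff]
  intro y hy
  have hy' : ∀ (ν : ℂ) (h : ‖ν‖ < 1), ν ∈ S → (inner ℂ (eVec ν h) y : ℂ) = 0 := by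
    intro ν h hν
    exact (Submodule.mem_orthogonal _ y).mp hy _ (Submodule.subset_span ⟨ν, h, hν, rfl⟩)
  have hsum : ∀ μ ∈ S, ∑' n, (y n : ℂ) • μ ^ n = 0 := by
    intro μ hμ
    have h1 : ‖(starRingEnd ℂ) μ‖ < 1 := by
      rw [RCLike.norm_conj]; exact hS1 μ hμ
    have h0 := hy' _ h1 (hSconj μ hμ)
    rw [lp.inner_eq_tsum] at h0
    simp only [RCLike.inner_apply, eVec_apply, map_pow, Complex.conj_conj] at h0
    rw [← h0]
    exact tsum_congr fun n => by rw [smul_eq_mul, mul_comm]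
  have hc : (fun n : ℕ => (y n : ℂ)) = 0 :=
    coeff_zero (C := ‖y‖) (fun n => lp.norm_apply_le_norm two_ne_zero y n)
      hSo hSne hS1 hsum
  apply lp.ext
  funext n
  rw [lp.coeFn_zero]
  exact congrFun hc n


lemma eigen_pow (A : Hsp →L[ℂ] Hsp) (μ : ℂ) (x : Hsp) (h : A x = μ • x) (n : ℕ) :
    (A ^ n) x = μ ^ n • x := by
  induction n with
  | zero => simp
  | succ n ih =>
    rw [pow_succ', ContinuousLinearMap.mul_apply, ih, map_smul, h, smul_smul, ← pow_succ]

lemma T_eVec (T : Hsp →L[ℂ] Hsp) (hT : ∀ (x : Hsp) (n : ℕ), T x n = x (n + 1))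
    (ν : ℂ) (hν : ‖ν‖ < 1) : T (eVec ν hν) = ν • eVec ν hν := by
  apply lp.ext
  funext n
  show T (eVec ν hν) n = (ν • eVec ν hν : Hsp) n
  rw [hT, lp.coeFn_smul]
  simp [pow_succ, mul_comm]

lemma smulT_eVec (α : ℂ) (T : Hsp →L[ℂ] Hsp) (hT : ∀ (x : Hsp) (n : ℕ), T x n = x (n + 1))
    (ν : ℂ) (hν : ‖ν‖ < 1) : (α • T) (eVec ν hν) = (α * ν) • eVec ν hν := by
  rw [ContinuousLinearMap.smul_apply, T_eVec T hT, smul_smul]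

lemma transitive (α : ℂ) (hα : 1 < ‖α‖) (T : Hsp →L[ℂ] Hsp)
    (hT : ∀ (x : Hsp) (n : ℕ), T x n = x (n + 1))
    (U V : Set Hsp) (hU : IsOpen U) (hUne : U.Nonempty) (hV : IsOpen V) (hVne : V.Nonempty) :
    ∃ (n : ℕ) (z : Hsp), z ∈ U ∧ ((α • T) ^ n) z ∈ V := by
  have hαpos : (0:ℝ) < ‖α‖ := lt_trans one_pos hα
  have hinvpos : (0:ℝ) < ‖α‖⁻¹ := by positivity
  have hinvlt : ‖α‖⁻¹ < 1 := by
    rw [inv_lt_one_iff₀]; right; exact hα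
  -- the two parameter sets
  set S₁ : Set ℂ := Metric.ball (0:ℂ) (‖α‖⁻¹) with hS₁def
  set S₂ : Set ℂ := {ν : ℂ | ‖α‖⁻¹ < ‖ν‖} ∩ Metric.ball (0:ℂ) 1 with hS₂def
  have hmem₁ : ∀ ν : ℂ, ν ∈ S₁ ↔ ‖ν‖ < ‖α‖⁻¹ := fun ν => by
    rw [hS₁def, Metric.mem_ball, dist_zero_right]
  have hmem₂ : ∀ ν : ℂ, ν ∈ S₂ ↔ ‖α‖⁻¹ < ‖ν‖ ∧ ‖ν‖ < 1 := fun ν => by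
    rw [hS₂def, Set.mem_inter_iff, Set.mem_setOf_eq, Metric.mem_ball, dist_zero_right]
  have hS₁1 : ∀ ν ∈ S₁, ‖ν‖ < 1 := fun ν hν => lt_trans ((hmem₁ ν).mp hν) hinvlt
  have hS₂1 : ∀ ν ∈ S₂, ‖ν‖ < 1 := fun ν hν => ((hmem₂ ν).mp hν).2
  have hD₁ := dense_span_eVec S₁ Metric.isOpen_ball ⟨0, by rw [hmem₁]; simpa using hinvpos⟩
    hS₁1 (fun ν hν => by rw [hmem₁] at hν ⊢; simpa using hν)
  have hD₂ := dense_span_eVec S₂ ((isOpen_lt continuous_const continuous_norm).inter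
      Metric.isOpen_ball)
    ⟨(((‖α‖⁻¹ + 1)/2 : ℝ) : ℂ), by
      rw [hmem₂, Complex.norm_real, Real.norm_eq_abs, abs_of_pos (by linarith)]
      constructor <;> linarith⟩
    hS₂1 (fun ν hν => by rw [hmem₂] at hν ⊢; simpa using hν)
  -- points in U, V from the dense spans
  obtain ⟨u, huU, huM⟩ := hD₁.inter_open_nonempty U hU hUne
  obtain ⟨v, hvV, hvM⟩ := hD₂.inter_open_nonempty V hV hVne
  -- orbits of span elements of S₁ tend to zero
  have hP : Tendsto (fun n => ((α • T) ^ n) u) atTop (𝓝 0) := by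
    refine Submodule.span_induction (p := fun x _ =>
        Tendsto (fun n => ((α • T) ^ n) x) atTop (𝓝 0)) ?_ ?_ ?_ ?_ huM
    · rintro x ⟨ν, h, hν, rfl⟩
      have hnorm : ‖α * ν‖ < 1 := by
        rw [norm_mul]
        calc ‖α‖ * ‖ν‖ < ‖α‖ * ‖α‖⁻¹ :=
          mul_lt_mul_of_pos_left ((hmem₁ ν).mp hν) hαpos
        _ = 1 := mul_inv_cancel₀ (ne_of_gt hαpos)
      have := (tendsto_pow_atTop_nhds_zero_of_norm_lt_one hnorm).smul_const (eVec ν h)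
      rw [zero_smul] at this
      refine this.congr fun n => ?_
      rw [eigen_pow _ _ _ (smulT_eVec α T hT ν h)]
    · exact tendsto_const_nhds.congr fun n => (map_zero _).symm
    · intro x y _ _ hx hy
      have := hx.add hy
      rw [add_zero] at this
      exact this.congr fun n => (map_add _ _ _).symm
    · intro c x _ hx
      have := hx.const_smul c
      rw [smul_zero] at this
      exact this.congr fun n => (map_smul _ _ _).symm
  -- backward orbits for span elements of S₂
  have hQ : ∃ w : ℕ → Hsp, Tendsto w atTop (𝓝 0) ∧ ∀ n, ((α • T) ^ n) (w n) = v := by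
    refine Submodule.span_induction (p := fun x _ =>
        ∃ w : ℕ → Hsp, Tendsto w atTop (𝓝 0) ∧ ∀ n, ((α • T) ^ n) (w n) = x) ?_ ?_ ?_ ?_ hvM
    · rintro x ⟨ν, h, hν, rfl⟩
      have h1 : 1 < ‖α * ν‖ := by
        rw [norm_mul]
        calc (1:ℝ) = ‖α‖ * ‖α‖⁻¹ := (mul_inv_cancel₀ (ne_of_gt hαpos)).symm
        _ < ‖α‖ * ‖ν‖ := mul_lt_mul_of_pos_left ((hmem₂ ν).mp hν).1 hαpos
      have hne : α * ν ≠ 0 := by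
        intro h0
        rw [h0] at h1
        simp at h1
        linarith
      have hinv : ‖(α * ν)⁻¹‖ < 1 := by
        rw [norm_inv]
        exact inv_lt_one_of_one_lt₀ h1
      refine ⟨fun n => ((α * ν)⁻¹) ^ n • eVec ν h, ?_, ?_⟩
      · have := (tendsto_pow_atTop_nhds_zero_of_norm_lt_one hinv).smul_const (eVec ν h)
        rwa [zero_smul] at this
      · intro n
        rw [map_smul, eigen_pow _ _ _ (smulT_eVec α T hT ν h), smul_smul, ← mul_pow,
          inv_mul_cancel₀ hne, one_pow, one_smul]
    · exact ⟨fun _ => 0, tendsto_const_nhds, fun n => map_zero _⟩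
    · rintro x y _ _ ⟨w₁, hw₁, hwx⟩ ⟨w₂, hw₂, hwy⟩
      refine ⟨w₁ + w₂, by have := hw₁.add hw₂; rw [add_zero] at this; exact this, fun n => ?_⟩
      simp only [Pi.add_apply, map_add, hwx n, hwy n]
    · rintro c x _ ⟨w, hw, hwx⟩
      refine ⟨fun n => c • w n, by simpa using hw.const_smul c, fun n => ?_⟩
      rw [map_smul, hwx n]
  obtain ⟨w, hw, hwv⟩ := hQ
  have htend1 : Tendsto (fun n => u + w n) atTop (𝓝 u) := by
    have := tendsto_const_nhds (x := u) (f := atTop (α := ℕ)) |>.add hw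
    rwa [add_zero] at this
  have htend2 : Tendsto (fun n => ((α • T) ^ n) u + v) atTop (𝓝 v) := by
    have := hP.add (tendsto_const_nhds (x := v) (f := atTop (α := ℕ)))
    rwa [zero_add] at this
  have h1 : ∀ᶠ n in atTop, u + w n ∈ U := htend1.eventually (hU.eventually_mem huU)
  have h2 : ∀ᶠ n in atTop, ((α • T) ^ n) u + v ∈ V :=
    htend2.eventually (hV.eventually_mem hvV)
  obtain ⟨n, hn1, hn2⟩ := (h1.and h2).exists
  refine ⟨n, u + w n, hn1, ?_⟩
  rw [map_add, hwv n]
  exact hn2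


lemma separable : SeparableSpace Hsp := by
  set S0 : Set Hsp := Set.range (fun k : ℕ => lp.single 2 k (1:ℂ)) with hS0
  have hdense : Dense (Submodule.span ℂ S0 : Set Hsp) := by
    intro f
    have hsum := lp.hasSum_single (E := fun _ : ℕ => ℂ) (p := 2) (by norm_num) f
    refine mem_closure_of_tendsto hsum (Filter.Eventually.of_forall fun s => ?_)
    apply Submodule.sum_mem
    intro k _
    have hk : (f k) • (lp.single 2 k (1:ℂ) : Hsp) = lp.single 2 k (f k) := by
      rw [← lp.single_smul (E := fun _ : ℕ => ℂ) 2 k (f k) (1:ℂ), smul_eq_mul, mul_one]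
    rw [← hk]
    exact Submodule.smul_mem _ _ (Submodule.subset_span ⟨k, rfl⟩)
  have huniv : IsSeparable (Set.univ : Set Hsp) := by
    have h1 : IsSeparable (Submodule.span ℂ S0 : Set Hsp) :=
      (Set.countable_range _).isSeparable.span
    exact h1.closure.mono (by rw [hdense.closure_eq])
  exact isSeparable_univ_iff.mp huniv

lemma exists_hypercyclic (α : ℂ) (hα : 1 < ‖α‖) (T : Hsp →L[ℂ] Hsp)
    (hT : ∀ (x : Hsp) (n : ℕ), T x n = x (n + 1)) :
    ∃ y : Hsp, Dense (Set.range fun n : ℕ => ((α • T) ^ n) y) := by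
  haveI : SeparableSpace Hsp := separable
  haveI : SecondCountableTopology Hsp := UniformSpace.secondCountable_of_separable _
  haveI : Countable (countableBasis Hsp) := (countable_countableBasis Hsp).to_subtype
  set G : Set Hsp :=
    ⋂ b : countableBasis Hsp, ⋃ n : ℕ, ((α • T) ^ n) ⁻¹' (b : Set Hsp) with hG
  have hGdense : Dense G := by
    apply dense_iInter_of_isOpen
    · intro b
      exact isOpen_iUnion fun n => (((α • T) ^ n).continuous).isOpen_preimage _
        (isOpen_of_mem_countableBasis b.2)
    · intro b
      rw [dense_iff_inter_open]
      intro U hU hUne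
      obtain ⟨n, z, hz, hz'⟩ := transitive α hα T hT U (b : Set Hsp) hU hUne
        (isOpen_of_mem_countableBasis b.2) (nonempty_of_mem_countableBasis b.2)
      exact ⟨z, hz, Set.mem_iUnion.mpr ⟨n, hz'⟩⟩
  obtain ⟨y, hy⟩ := hGdense.nonempty
  refine ⟨y, ?_⟩
  rw [dense_iff_inter_open]
  intro U hU hUne
  obtain ⟨x, hx⟩ := hUne
  obtain ⟨b, hb, hxb, hbU⟩ := (isBasis_countableBasis Hsp).exists_subset_of_mem_open hx hU
  obtain ⟨n, hn⟩ := Set.mem_iUnion.mp (Set.mem_iInter.mp hy ⟨b, hb⟩)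
  exact ⟨((α • T) ^ n) y, hbU hn, Set.mem_range_self n⟩

end Stmt12Aux

open Stmt12Aux in
/-- Rolewicz / Godefroy–Shapiro: for the left shift T on ℓ² and |α| > 1, both the span of
eigenvectors of αT with eigenvalues of modulus < 1 and the span of eigenvectors with
eigenvalues of modulus > 1 are dense; consequently αT is hypercyclic. -/
theorem stmt_12 (α : ℂ) (hα : 1 < ‖α‖)
    (T : lp (fun _ : ℕ => ℂ) 2 →L[ℂ] lp (fun _ : ℕ => ℂ) 2)
    (hT : ∀ (x : lp (fun _ : ℕ => ℂ) 2) (n : ℕ), T x n = x (n + 1)) :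
    Dense (Submodule.span ℂ
      {x : lp (fun _ : ℕ => ℂ) 2 | x ≠ 0 ∧ ∃ μ : ℂ, ‖μ‖ < 1 ∧ (α • T) x = μ • x}
      : Set (lp (fun _ : ℕ => ℂ) 2)) ∧
    Dense (Submodule.span ℂ
      {x : lp (fun _ : ℕ => ℂ) 2 | x ≠ 0 ∧ ∃ μ : ℂ, 1 < ‖μ‖ ∧ (α • T) x = μ • x}
      : Set (lp (fun _ : ℕ => ℂ) 2)) ∧
    ∃ y : lp (fun _ : ℕ => ℂ) 2, Dense (Set.range fun n : ℕ => ((α • T) ^ n) y) := by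
  have hα' : 1 < ‖α‖ := by exact hα
  have hαpos : (0:ℝ) < ‖α‖ := lt_trans one_pos hα'
  have hinvpos : (0:ℝ) < ‖α‖⁻¹ := by positivity
  have hinvlt : ‖α‖⁻¹ < 1 := by
    rw [inv_lt_one_iff₀]; right; exact hα'
  refine ⟨?_, ?_, exists_hypercyclic α hα' T hT⟩
  · -- eigenvalues of modulus < 1
    set S₁ : Set ℂ := Metric.ball (0:ℂ) (‖α‖⁻¹) with hS₁def
    have hmem₁ : ∀ ν : ℂ, ν ∈ S₁ ↔ ‖ν‖ < ‖α‖⁻¹ := fun ν => by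
      rw [hS₁def, Metric.mem_ball, dist_zero_right]
    have hS₁1 : ∀ ν ∈ S₁, ‖ν‖ < 1 := fun ν hν => lt_trans ((hmem₁ ν).mp hν) hinvlt
    have hD := dense_span_eVec S₁ Metric.isOpen_ball ⟨0, by rw [hmem₁]; simpa using hinvpos⟩
      hS₁1 (fun ν hν => by rw [hmem₁] at hν ⊢; simpa using hν)
    refine hD.mono (Submodule.span_mono ?_)
    rintro x ⟨ν, h, hν, rfl⟩
    refine ⟨eVec_ne_zero ν h, α * ν, ?_, smulT_eVec α T hT ν h⟩
    rw [norm_mul]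
    calc ‖α‖ * ‖ν‖ < ‖α‖ * ‖α‖⁻¹ := mul_lt_mul_of_pos_left ((hmem₁ ν).mp hν) hαpos
    _ = 1 := mul_inv_cancel₀ (ne_of_gt hαpos)
  · -- eigenvalues of modulus > 1
    set S₂ : Set ℂ := {ν : ℂ | ‖α‖⁻¹ < ‖ν‖} ∩ Metric.ball (0:ℂ) 1 with hS₂def
    have hmem₂ : ∀ ν : ℂ, ν ∈ S₂ ↔ ‖α‖⁻¹ < ‖ν‖ ∧ ‖ν‖ < 1 := fun ν => by
      rw [hS₂def, Set.mem_inter_iff, Set.mem_setOf_eq, Metric.mem_ball, dist_zero_right]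
    have hS₂1 : ∀ ν ∈ S₂, ‖ν‖ < 1 := fun ν hν => ((hmem₂ ν).mp hν).2
    have hD := dense_span_eVec S₂ ((isOpen_lt continuous_const continuous_norm).inter
        Metric.isOpen_ball)
      ⟨(((‖α‖⁻¹ + 1)/2 : ℝ) : ℂ), by
        rw [hmem₂, Complex.norm_real, Real.norm_eq_abs, abs_of_pos (by linarith)]
        constructor <;> linarith⟩
      hS₂1 (fun ν hν => by rw [hmem₂] at hν ⊢; simpa using hν)
    refine hD.mono (Submodule.span_mono ?_)
    rintro x ⟨ν, h, hν, rfl⟩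
    refine ⟨eVec_ne_zero ν h, α * ν, ?_, smulT_eVec α T hT ν h⟩
    rw [norm_mul]
    calc (1:ℝ) = ‖α‖ * ‖α‖⁻¹ := (mul_inv_cancel₀ (ne_of_gt hαpos)).symm
    _ < ‖α‖ * ‖ν‖ := mul_lt_mul_of_pos_left ((hmem₂ ν).mp hν).1 hαpos
end
end

section
/- Let h : closure(𝔻) → ℂ be continuous, analytic on 𝔻, and injective on closure(𝔻). Then the boundary ∂(h(𝔻)) equals h(∂𝔻) = h(unit circle), and ℂ \ closure(h(𝔻)) is connected. -/
open Complex Metric Set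

/-- A continuous nonvanishing function on a closed ball admits a continuous logarithm. -/
lemma exists_log_lift {r : ℝ} (hr : 0 ≤ r) (H : ℂ → ℂ)
    (hH : ContinuousOn H (closedBall (0:ℂ) r)) (hne : ∀ z ∈ closedBall (0:ℂ) r, H z ≠ 0) :
    ∃ L : ℂ → ℂ, ContinuousOn L (closedBall (0:ℂ) r) ∧
      ∀ z ∈ closedBall (0:ℂ) r, Complex.exp (L z) = H z := by
  have hcomp : IsCompact (closedBall (0:ℂ) r) := isCompact_closedBall 0 r
  have h0 : (0:ℂ) ∈ closedBall (0:ℂ) r := by simp [hr]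
  -- minimum of ‖H‖
  obtain ⟨zm, hzm, hmin⟩ := hcomp.exists_isMinOn ⟨0, h0⟩ (hH.norm)
  set m : ℝ := ‖H zm‖ with hm
  have hmpos : 0 < m := by
    simpa [hm, norm_pos_iff] using hne zm hzm
  -- uniform continuity
  have huc : UniformContinuousOn H (closedBall (0:ℂ) r) :=
    hcomp.uniformContinuousOn_of_continuous hH
  rw [Metric.uniformContinuousOn_iff] at huc
  obtain ⟨δ, hδ, hδ'⟩ := huc m hmpos
  obtain ⟨n, hn⟩ := exists_nat_gt (r / δ)
  have hn0 : 0 < (n:ℝ) + 1 := by positivity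
  -- the subdivision points
  set N : ℕ := n + 1 with hN
  have hNpos : 0 < (N:ℝ) := by exact_mod_cast Nat.succ_pos n
  have hrN : r / N < δ := by
    rw [div_lt_iff₀ hNpos]
    rcases eq_or_lt_of_le hr with h | h
    · simpa [← h] using mul_pos hδ hNpos
    · calc r = (r/δ) * δ := by field_simp
        _ < N * δ := by
          apply mul_lt_mul_of_pos_right _ hδ
          calc r/δ < n := hn
            _ ≤ N := by exact_mod_cast Nat.le_succ n
        _ = δ * N := mul_comm _ _
  have hpt : ∀ (k : ℕ), k ≤ N → ∀ z ∈ closedBall (0:ℂ) r,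
      ((k:ℂ)/N) * z ∈ closedBall (0:ℂ) r := by
    intro k hk z hz
    simp only [mem_closedBall, dist_zero_right] at hz ⊢
    rw [norm_mul]
    calc ‖(k:ℂ)/(N:ℂ)‖ * ‖z‖ ≤ 1 * r := by
          apply mul_le_mul _ hz (norm_nonneg z) zero_le_one
          rw [norm_div]
          simp only [Complex.norm_natCast]
          rw [div_le_one hNpos]
          exact_mod_cast hk
      _ = r := one_mul r
  have hclose : ∀ (k : ℕ), k < N → ∀ z ∈ closedBall (0:ℂ) r,
      ‖H (((k+1:ℕ):ℂ)/N * z) - H ((k:ℂ)/N * z)‖ < m := by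
    intro k hk z hz
    have h1 : ((k+1:ℕ):ℂ)/N * z ∈ closedBall (0:ℂ) r := hpt (k+1) hk z hz
    have h2 : ((k:ℕ):ℂ)/N * z ∈ closedBall (0:ℂ) r := hpt k hk.le z hz
    have := hδ' _ h1 _ h2 ?_
    · simpa [dist_eq_norm] using this
    · rw [dist_eq_norm]
      have : ((k+1:ℕ):ℂ)/N * z - ((k:ℕ):ℂ)/N * z = z / N := by
        push_cast; ring
      rw [this]
      calc ‖z / (N:ℂ)‖ = ‖z‖ / N := by
            rw [norm_div]; simp
        _ ≤ r / N := by
            gcongr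
            simpa [dist_eq_norm] using hz
        _ < δ := hrN
  -- the ratios lie in ball 1 1 ⊆ slitPlane
  set q : ℕ → ℂ → ℂ := fun k z => H (((k+1:ℕ):ℂ)/N * z) / H ((k:ℂ)/N * z) with hq
  have hmle : ∀ z ∈ closedBall (0:ℂ) r, m ≤ ‖H z‖ := fun z hz => hmin hz
  have hqball : ∀ (k : ℕ), k < N → ∀ z ∈ closedBall (0:ℂ) r, q k z ∈ ball (1:ℂ) 1 := by
    intro k hk z hz
    have hb : ((k:ℕ):ℂ)/N * z ∈ closedBall (0:ℂ) r := hpt k hk.le z hz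
    have hbn : H (((k:ℕ):ℂ)/N * z) ≠ 0 := hne _ hb
    rw [mem_ball, dist_eq_norm, hq]
    simp only []
    rw [div_sub_one hbn, norm_div, div_lt_one (by simpa [norm_pos_iff] using hbn)]
    exact lt_of_lt_of_le (hclose k hk z hz) (hmle _ hb)
  have hqne : ∀ (k : ℕ), k < N → ∀ z ∈ closedBall (0:ℂ) r, q k z ≠ 0 := by
    intro k hk z hz
    exact div_ne_zero (hne _ (hpt (k+1) hk z hz)) (hne _ (hpt k hk.le z hz))
  refine ⟨fun z => Complex.log (H 0) +
      ∑ k ∈ Finset.range N, Complex.log (q k z), ?_, ?_⟩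
  · apply ContinuousOn.add continuousOn_const
    apply continuousOn_finset_sum
    intro k hk
    rw [Finset.mem_range] at hk
    apply ContinuousOn.clog
    · apply ContinuousOn.div
      · exact hH.comp (continuousOn_const.mul continuousOn_id) (fun z hz => hpt (k+1) hk z hz)
      · exact hH.comp (continuousOn_const.mul continuousOn_id) (fun z hz => hpt k hk.le z hz)
      · intro z hz; exact hne _ (hpt k hk.le z hz)
    · intro z hz
      exact Complex.ball_one_subset_slitPlane (hqball k hk z hz)
  · intro z hz
    rw [Complex.exp_add, Complex.exp_sum, Complex.exp_log (hne 0 h0)]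
    have key : ∀ j : ℕ, j ≤ N → H 0 * ∏ k ∈ Finset.range j, Complex.exp (Complex.log (q k z))
        = H ((j:ℂ)/N * z) := by
      intro j hj
      induction j with
      | zero => simp
      | succ i ih =>
        rw [Finset.prod_range_succ, ← mul_assoc, ih (Nat.le_of_succ_le hj),
          Complex.exp_log (hqne i hj z hz), hq]
        have hbn : H (((i:ℕ):ℂ)/N * z) ≠ 0 := hne _ (hpt i (Nat.le_of_succ_le hj) z hz)
        rw [mul_comm]
        exact div_mul_cancel₀ _ hbn
    have := key N le_rfl
    rw [div_self (by exact_mod_cast hNpos.ne' : (N:ℂ) ≠ 0), one_mul] at this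
    exact this

/-- A continuous logarithm-lift of a differentiable curve is differentiable, with
derivative `γ'/γ`. -/
lemma lift_hasDerivAt {θ γ : ℝ → ℂ} {g' : ℂ} {t₀ : ℝ}
    (hθ : Continuous θ) (hexp : ∀ t, Complex.exp (θ t) = γ t)
    (hγ : HasDerivAt γ g' t₀) : HasDerivAt θ (g' / γ t₀) t₀ := by
  have hne : ∀ t, γ t ≠ 0 := fun t => by rw [← hexp t]; exact Complex.exp_ne_zero _
  set u : ℝ → ℂ := fun t => γ t / γ t₀ with hu
  have hu0 : u t₀ = 1 := div_self (hne t₀)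
  have hud : HasDerivAt u (g' / γ t₀) t₀ := hγ.div_const _
  have huc : ContinuousAt u t₀ := hud.continuousAt
  have hφd : HasDerivAt (fun t => θ t₀ + Complex.log (u t)) (g' / γ t₀) t₀ := by
    have := (hud.clog_real (by rw [hu0]; exact Complex.one_mem_slitPlane)).const_add (θ t₀)
    simpa [hu0] using this
  apply hφd.congr_of_eventuallyEq
  -- θ and the local formula agree near t₀
  set ψ : ℝ → ℂ := fun t => θ t - (θ t₀ + Complex.log (u t)) with hψ
  have hψ0 : ψ t₀ = 0 := by simp [hψ, hu0]
  have hψval : ∀ t, Complex.exp (ψ t) = 1 := by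
    intro t
    have hut : u t ≠ 0 := div_ne_zero (hne t) (hne t₀)
    rw [hψ]
    simp only [Complex.exp_sub, Complex.exp_add, hexp, Complex.exp_log hut, hu]
    field_simp
    exact (Complex.exp_log hut).symm
  have hψc : ContinuousAt ψ t₀ := by
    apply (hθ.continuousAt).sub
    apply continuousAt_const.add
    exact huc.clog (by rw [hu0]; exact Complex.one_mem_slitPlane)
  have hsmall : ∀ᶠ t in nhds t₀, ‖ψ t - ψ t₀‖ < 2 * Real.pi := by
    have h2π : (0:ℝ) < 2 * Real.pi := by positivity
    have := hψc.tendsto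
    rw [Metric.tendsto_nhds] at this
    filter_upwards [this _ h2π] with t ht
    simpa [dist_eq_norm] using ht
  filter_upwards [hsmall] with t ht
  have hzero : ψ t = 0 := by
    obtain ⟨n, hn⟩ := Complex.exp_eq_one_iff.mp (hψval t)
    rw [hψ0, sub_zero, hn] at ht
    rw [norm_mul, Complex.norm_intCast] at ht
    have h2 : ‖(2 * (Real.pi:ℂ) * Complex.I)‖ = 2 * Real.pi := by
      simp [norm_mul]
      exact Real.pi_pos.le
    rw [h2] at ht
    have hn0 : n = 0 := by
      by_contra hcon
      have : (1:ℝ) ≤ |(n:ℝ)| := by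
        rw [← Int.cast_abs]
        exact_mod_cast Int.one_le_abs (by exact_mod_cast hcon)
      nlinarith [Real.pi_pos]
    simp [hn, hn0]
  exact sub_eq_zero.mp hzero

/-- There is no continuous map on the closed disc of radius `r` avoiding the value `w`
(with `‖w‖ < r`) which is the identity on the boundary circle. -/
lemma no_retraction {r : ℝ} (hr : 0 < r) {w : ℂ} (hw : ‖w‖ < r) {Φ : ℂ → ℂ}
    (hΦ : Continuous Φ) (hne : ∀ z ∈ closedBall (0:ℂ) r, Φ z ≠ w)
    (hid : ∀ z ∈ sphere (0:ℂ) r, Φ z = z) : False := by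
  obtain ⟨L, hL, hLexp⟩ := exists_log_lift hr.le (fun z => Φ z - w)
    ((hΦ.continuousOn).sub continuousOn_const)
    (fun z hz => sub_ne_zero.mpr (hne z hz))
  set θ : ℝ → ℂ := fun t => L (circleMap 0 r t) with hθ
  have hmem : ∀ t, circleMap 0 r t ∈ closedBall (0:ℂ) r := fun t =>
    circleMap_mem_closedBall 0 hr.le t
  have hθc : Continuous θ := hL.comp_continuous (continuous_circleMap 0 r) hmem
  set γ : ℝ → ℂ := fun t => circleMap 0 r t - w with hγ
  have hexp : ∀ t, Complex.exp (θ t) = γ t := by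
    intro t
    rw [hθ, hγ]
    simp only []
    rw [hLexp _ (hmem t), hid _ (circleMap_mem_sphere 0 hr.le t)]
  have hγne : ∀ t, γ t ≠ 0 := by
    intro t
    rw [hγ]
    simp only []
    intro hcon
    rw [sub_eq_zero] at hcon
    have : ‖circleMap 0 r t‖ = r := by
      simp [circleMap, abs_of_pos hr, norm_mul]
    rw [hcon] at this
    exact absurd this (ne_of_lt hw)
  have hθd : ∀ t, HasDerivAt θ (circleMap 0 r t * Complex.I / γ t) t := by
    intro t
    exact lift_hasDerivAt hθc hexp ((hasDerivAt_circleMap 0 r t).sub_const w)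
  have hf'c : Continuous fun t => circleMap 0 r t * Complex.I / γ t := by
    apply Continuous.div ((continuous_circleMap 0 r).mul continuous_const)
    · exact (continuous_circleMap 0 r).sub continuous_const
    · exact hγne
  have hFTC : ∫ t in (0:ℝ)..(2*Real.pi), circleMap 0 r t * Complex.I / γ t
      = θ (2*Real.pi) - θ 0 := by
    apply intervalIntegral.integral_eq_sub_of_hasDerivAt (fun t _ => hθd t)
    exact hf'c.intervalIntegrable _ _
  have hper : θ (2*Real.pi) = θ 0 := by
    rw [hθ]
    simp only []
    congr 1
    have := periodic_circleMap 0 r 0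
    rwa [zero_add] at this
  have hcirc : (∮ z in C(0, r), (z - w)⁻¹) = 2 * Real.pi * Complex.I :=
    circleIntegral.integral_sub_inv_of_mem_ball (by simpa [mem_ball, dist_eq_norm] using hw)
  have hcirc2 : (∮ z in C(0, r), (z - w)⁻¹)
      = ∫ t in (0:ℝ)..(2*Real.pi), circleMap 0 r t * Complex.I / γ t := by
    rw [circleIntegral]
    congr 1
    ext t
    rw [deriv_circleMap, hγ]
    simp only [smul_eq_mul]
    rw [div_eq_mul_inv]
  rw [hcirc2, hFTC, hper, sub_self] at hcirc
  have : (2 * Real.pi * Complex.I) ≠ 0 := by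
    simp [Real.pi_ne_zero, Complex.I_ne_zero, Complex.ofReal_eq_zero]
  exact this hcirc.symm

/-- The complement of a closed ball in `ℂ` is connected. -/
lemma isConnected_compl_closedBall_complex {R : ℝ} (hR : 0 ≤ R) :
    IsConnected ((closedBall (0:ℂ) R)ᶜ) := by
  have hrank : 1 < Module.rank ℝ ℂ := by
    rw [Complex.rank_real_complex]
    exact_mod_cast Nat.one_lt_ofNat
  have hprod : IsConnected ((Set.Ioi R) ×ˢ (sphere (0:ℂ) 1)) :=
    (isConnected_Ioi).prod (isConnected_sphere hrank 0 zero_le_one)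
  have himage : IsConnected ((fun p : ℝ × ℂ => p.1 • p.2) '' ((Set.Ioi R) ×ˢ (sphere (0:ℂ) 1))) :=
    hprod.image _ (continuous_fst.smul continuous_snd).continuousOn
  convert himage using 1
  ext z
  simp only [Set.mem_compl_iff, mem_closedBall, dist_zero_right, not_le, Set.mem_image,
    Set.mem_prod, Set.mem_Ioi, mem_sphere_iff_norm, sub_zero, Prod.exists]
  constructor
  · intro hz
    have hz0 : z ≠ 0 := by
      intro hcon; rw [hcon, norm_zero] at hz; exact absurd hz (not_lt.mpr hR)
    refine ⟨‖z‖, ‖z‖⁻¹ • z, ⟨hz, ?_⟩, ?_⟩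
    · rw [norm_smul, norm_inv, norm_norm, inv_mul_cancel₀ (norm_ne_zero_iff.mpr hz0)]
    · rw [smul_smul, mul_inv_cancel₀ (norm_ne_zero_iff.mpr hz0), one_smul]
  · rintro ⟨t, v, ⟨ht, hv⟩, rfl⟩
    rw [norm_smul, hv, mul_one, Real.norm_eq_abs, abs_of_pos (lt_of_le_of_lt hR ht)]
    exact ht

/-- A continuous retraction of the plane onto the image of the closed disc under a
continuous injective map. -/
lemma exists_retraction {h : ℂ → ℂ} (hc : ContinuousOn h (closedBall (0:ℂ) 1))
    (hi : Set.InjOn h (closedBall (0:ℂ) 1)) :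
    ∃ ρ : ℂ → ℂ, Continuous ρ ∧ (∀ x, ρ x ∈ h '' closedBall (0:ℂ) 1) ∧
      ∀ x ∈ h '' closedBall (0:ℂ) 1, ρ x = x := by
  classical
  haveI : CompactSpace (closedBall (0:ℂ) 1) :=
    isCompact_iff_compactSpace.mp (isCompact_closedBall _ _)
  set f : (closedBall (0:ℂ) 1) → ℂ := (closedBall (0:ℂ) 1).restrict h with hf
  have hfc : Continuous f := continuousOn_iff_continuous_restrict.mp hc
  have hfinj : Function.Injective f := fun a b hab => Subtype.ext (hi a.2 b.2 hab)
  set e : (closedBall (0:ℂ) 1) ≃ Set.range f := Equiv.ofInjective f hfinj with he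
  have hec : Continuous (e : (closedBall (0:ℂ) 1) → Set.range f) := by
    apply Continuous.subtype_mk hfc
  let homeo := Continuous.homeoOfEquivCompactToT2 (f := e) hec
  have hrange : Set.range f = h '' closedBall (0:ℂ) 1 := Set.range_restrict h _
  have hclosed : IsClosed (Set.range f) := by
    rw [hrange]
    exact ((isCompact_closedBall _ _).image_of_continuousOn hc).isClosed
  set g : C(Set.range f, ℂ) :=
    ⟨fun y => (homeo.symm y : ℂ), continuous_subtype_val.comp homeo.symm.continuous⟩ with hg
  obtain ⟨G, hG⟩ := ContinuousMap.exists_restrict_eq hclosed g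
  have hGval : ∀ y : Set.range f, G y = ((homeo.symm y : (closedBall (0:ℂ) 1)) : ℂ) := by
    intro y
    have := congrFun (congrArg (fun F : C(Set.range f, ℂ) => (F : Set.range f → ℂ)) hG) y
    exact (by simpa [ContinuousMap.restrict] using this : G y = g y)
  -- the projection onto the closed unit ball
  set proj : ℂ → ℂ := fun y => (max 1 ‖y‖)⁻¹ • y with hproj
  have hprojc : Continuous proj := by
    have hs : ∀ {F : ℂ → ℝ}, Continuous F → Continuous (fun y : ℂ => F y • y) :=
      fun hF => hF.smul continuous_id
    apply hs
    apply Continuous.inv₀ (continuous_const.max continuous_norm)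
    intro y
    exact ne_of_gt (lt_max_iff.mpr (Or.inl one_pos))
  have hprojmem : ∀ y, proj y ∈ closedBall (0:ℂ) 1 := by
    intro y
    have h1 : (0:ℝ) < max 1 ‖y‖ := lt_max_iff.mpr (Or.inl one_pos)
    simp only [hproj, mem_closedBall, dist_zero_right, norm_smul, norm_inv,
      Real.norm_eq_abs, abs_of_pos h1]
    rw [inv_mul_le_iff₀ h1, mul_one]
    exact le_max_right 1 ‖y‖
  have hprojid : ∀ y ∈ closedBall (0:ℂ) 1, proj y = y := by
    intro y hy
    simp only [mem_closedBall, dist_zero_right] at hy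
    have hmax : max 1 ‖y‖ = 1 := max_eq_left hy
    rw [hproj]
    simp only [hmax]
    norm_num
  refine ⟨fun x => h (proj (G x)), ?_, ?_, ?_⟩
  · exact hc.comp_continuous (hprojc.comp G.continuous) (fun x => hprojmem _)
  · exact fun x => Set.mem_image_of_mem h (hprojmem _)
  · intro x hx
    show h (proj (G x)) = x
    have hxr : x ∈ Set.range f := by rw [hrange]; exact hx
    have : G x = ((homeo.symm ⟨x, hxr⟩ : (closedBall (0:ℂ) 1)) : ℂ) := hGval ⟨x, hxr⟩
    rw [this, hprojid _ (homeo.symm ⟨x, hxr⟩).2]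
    have : f (homeo.symm ⟨x, hxr⟩) = x := by
      have h2 : (homeo (homeo.symm ⟨x, hxr⟩) : ℂ) = x := by
        rw [Homeomorph.apply_symm_apply]
      have h3 : ∀ b : (closedBall (0:ℂ) 1), (homeo b : ℂ) = f b := fun b => rfl
      rw [← h3]
      exact h2
    exact this


/-- For h continuous and injective on the closed unit disc and analytic in the interior,
the boundary of h(𝔻) is h(𝕋), and the complement of the closure of h(𝔻) is connected. -/
theorem stmt_13 (h : ℂ → ℂ)
    (hc : ContinuousOn h (Metric.closedBall (0 : ℂ) 1))
    (ha : DifferentiableOn ℂ h (Metric.ball (0 : ℂ) 1))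
    (hi : Set.InjOn h (Metric.closedBall (0 : ℂ) 1)) :
    frontier (h '' Metric.ball (0 : ℂ) 1) = h '' Metric.sphere (0 : ℂ) 1 ∧
    IsConnected ((closure (h '' Metric.ball (0 : ℂ) 1))ᶜ) := by
  classical
  have hKcomp : IsCompact (h '' closedBall (0:ℂ) 1) :=
    (isCompact_closedBall _ _).image_of_continuousOn hc
  -- the image of the open ball is open
  have hOopen : IsOpen (h '' ball (0:ℂ) 1) := by
    have han : AnalyticOnNhd ℂ h (ball (0:ℂ) 1) := ha.analyticOnNhd isOpen_ball
    rcases han.is_constant_or_isOpen (convex_ball _ _).isPreconnected with hconst | hopen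
    · exfalso
      obtain ⟨v, hv⟩ := hconst
      have h0 : (0:ℂ) ∈ ball (0:ℂ) 1 := by simp
      have h12 : (1/2:ℂ) ∈ ball (0:ℂ) 1 := by
        simp only [mem_ball, dist_zero_right]
        rw [norm_div]
        simp
        norm_num
      have : (0:ℂ) = 1/2 :=
        hi (ball_subset_closedBall h0) (ball_subset_closedBall h12)
          ((hv 0 h0).trans (hv _ h12).symm)
      norm_num at this
    · exact hopen _ le_rfl isOpen_ball
  -- closure of the image of the open ball is the image of the closed ball
  have hclO : closure (h '' ball (0:ℂ) 1) = h '' closedBall (0:ℂ) 1 := by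
    apply Subset.antisymm
    · exact closure_minimal (Set.image_mono ball_subset_closedBall) hKcomp.isClosed
    · have h1 : h '' closure (ball (0:ℂ) 1) ⊆ closure (h '' ball (0:ℂ) 1) := by
        apply ContinuousOn.image_closure
        rw [closure_ball 0 one_ne_zero]
        exact hc
      rw [closure_ball 0 one_ne_zero] at h1
      exact h1
  -- Part 1: frontier
  have hfr : frontier (h '' ball (0:ℂ) 1) = h '' sphere (0:ℂ) 1 := by
    rw [frontier, hclO, hOopen.interior_eq]
    ext x
    constructor
    · rintro ⟨⟨z, hz, rfl⟩, hnot⟩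
      refine ⟨z, ?_, rfl⟩
      rw [mem_sphere_iff_norm, sub_zero]
      rcases lt_or_eq_of_le (by simpa [mem_closedBall, dist_zero_right] using hz) with hlt | heq
      · exact absurd (Set.mem_image_of_mem h (by simpa [mem_ball, dist_zero_right] using hlt))
          hnot
      · exact heq
    · rintro ⟨z, hz, rfl⟩
      rw [mem_sphere_iff_norm, sub_zero] at hz
      constructor
      · exact Set.mem_image_of_mem h
          (by rw [mem_closedBall, dist_zero_right, hz])
      · rintro ⟨z', hz', hzz⟩
        have : z' = z := hi (ball_subset_closedBall hz')
          (by rw [mem_closedBall, dist_zero_right, hz]) hzz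
        rw [← this] at hz
        rw [mem_ball, dist_zero_right] at hz'
        exact absurd hz (ne_of_lt hz')
  refine ⟨hfr, ?_⟩
  rw [hclO]
  -- Part 2: the complement of K := h '' closedBall is connected
  set K := h '' closedBall (0:ℂ) 1 with hK
  obtain ⟨R₀, hR₀⟩ := hKcomp.isBounded.subset_closedBall 0
  set R : ℝ := max R₀ 1 with hR
  have hRpos : (0:ℝ) < R := lt_of_lt_of_le one_pos (le_max_right _ _)
  have hKR : K ⊆ closedBall 0 R := hR₀.trans (closedBall_subset_closedBall (le_max_left _ _))
  have hEconn : IsConnected ((closedBall (0:ℂ) R)ᶜ) := isConnected_compl_closedBall_complex hRpos.le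
  have hEsub : (closedBall (0:ℂ) R)ᶜ ⊆ Kᶜ := Set.compl_subset_compl.mpr hKR
  have hKopen : IsOpen Kᶜ := hKcomp.isClosed.isOpen_compl
  -- key claim: no component of Kᶜ is bounded
  have key : ∀ w ∈ Kᶜ, ¬ (connectedComponentIn Kᶜ w ⊆ closedBall 0 R) := by
    intro w hw hbdd
    set U := connectedComponentIn Kᶜ w with hU
    have hUopen : IsOpen U := hKopen.connectedComponentIn
    have hwU : w ∈ U := mem_connectedComponentIn hw
    have hUK : U ⊆ Kᶜ := connectedComponentIn_subset _ _
    -- closure of U is contained in U ∪ K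
    have hclUK : closure U ⊆ U ∪ K := by
      intro x hx
      by_contra hcon
      rw [Set.mem_union, not_or] at hcon
      obtain ⟨hxU, hxK⟩ := hcon
      have hxKc : x ∈ Kᶜ := hxK
      have hVopen : IsOpen (connectedComponentIn Kᶜ x) := hKopen.connectedComponentIn
      have hxV : x ∈ connectedComponentIn Kᶜ x := mem_connectedComponentIn hxKc
      obtain ⟨y, hyV, hyU⟩ := mem_closure_iff.mp hx _ hVopen hxV
      have e1 : connectedComponentIn Kᶜ x = connectedComponentIn Kᶜ y :=
        connectedComponentIn_eq hyV
      have e2 : connectedComponentIn Kᶜ w = connectedComponentIn Kᶜ y :=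
        connectedComponentIn_eq hyU
      exact hxU (by rw [hU, e2, ← e1]; exact hxV)
    obtain ⟨ρ, hρc, hρmem, hρid⟩ := exists_retraction hc hi
    set Φ : ℂ → ℂ := fun x => if x ∈ closure U then ρ x else x with hΦ
    have hΦc : Continuous Φ := by
      apply Continuous.if _ hρc continuous_id
      intro a ha'
      have ha2 : a ∈ frontier (closure U) := by
        simpa [frontier] using ha'
      have haU : a ∈ closure U := by
        have := ha2.1
        rwa [closure_closure] at this
      have haK : a ∈ K := by
        rcases hclUK haU with hU' | hK'
        · exfalso
          exact ha2.2 (interior_maximal subset_closure hUopen hU')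
        · exact hK'
      exact hρid a haK
    have hclUbdd : closure U ⊆ closedBall 0 R :=
      closure_minimal hbdd isClosed_closedBall
    apply no_retraction (r := R + 1) (by linarith) (w := w) ?_ hΦc ?_ ?_
    · -- ‖w‖ < R + 1
      have := hbdd hwU
      rw [mem_closedBall, dist_zero_right] at this
      linarith
    · intro z hz
      rw [hΦ]
      by_cases hzU : z ∈ closure U
      · simp only [hzU, if_true]
        intro hcon
        exact hw (by rw [← hcon]; exact hρmem z)
      · simp only [hzU, if_false]
        intro hcon
        rw [hcon] at hzU
        exact hzU (subset_closure hwU)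
    · intro z hz
      rw [mem_sphere_iff_norm, sub_zero] at hz
      have hzU : z ∉ closure U := by
        intro hcon
        have := hclUbdd hcon
        rw [mem_closedBall, dist_zero_right] at this
        linarith
      rw [hΦ]
      simp only [hzU, if_false]
  -- conclude connectivity
  obtain ⟨w₀, hw₀E⟩ : ∃ w₀, w₀ ∈ (closedBall (0:ℂ) R)ᶜ := hEconn.nonempty
  have hw₀ : w₀ ∈ Kᶜ := hEsub hw₀E
  have hmain : Kᶜ ⊆ connectedComponentIn Kᶜ w₀ := by
    intro w hw
    obtain ⟨x, hxU, hxE⟩ : ∃ x, x ∈ connectedComponentIn Kᶜ w ∧ x ∈ (closedBall (0:ℂ) R)ᶜ := by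
      have := key w hw
      rw [Set.not_subset] at this
      obtain ⟨x, hx1, hx2⟩ := this
      exact ⟨x, hx1, hx2⟩
    have hunion : IsPreconnected (connectedComponentIn Kᶜ w ∪ (closedBall (0:ℂ) R)ᶜ) := by
      apply IsPreconnected.union x hxU hxE isPreconnected_connectedComponentIn
        hEconn.isPreconnected
    have hsub : connectedComponentIn Kᶜ w ∪ (closedBall (0:ℂ) R)ᶜ ⊆ Kᶜ :=
      Set.union_subset (connectedComponentIn_subset _ _) hEsub
    have := hunion.subset_connectedComponentIn (Set.mem_union_right _ hw₀E) hsub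
    exact this (Set.mem_union_left _ (mem_connectedComponentIn hw))
  have : Kᶜ = connectedComponentIn Kᶜ w₀ :=
    Subset.antisymm hmain (connectedComponentIn_subset _ _)
  rw [this]
  exact isConnected_connectedComponentIn_iff.mpr hw₀
end
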